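/- For a pair (B | A) with A an m×n matrix and B an m×k matrix over R, define its dual (B | A)* over the opposite ring Rᵒᵖ to be ( [Bᵀ; Aᵀ] | [0; Iₙ] ), where Xᵀ denotes the matrix over Rᵒᵖ whose (i,j) entry is the opposite-ring image of the (j,i) entry of X. Then the dual map is an anti-isomorphism up to equivalence: (B | A) ≤ₙ (B' | A') holds over R if and only if (B' | A')* ≤ₙ (B | A)* holds over Rᵒᵖ, and the double dual pair ((B | A)*)* over R is equivalent to (B | A): ((B | A)*)* ≈ₙ (B | A). -/

import Mathlib

/-- `(B | A) ≤ₙ (B' | A')`: there exist matrices `U`, `V`, `G` with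
`U * B = B' * V` and `U * A = A' + B' * G`. -/
def MatPairLE (R : Type*) [Ring R] {m k m' k' n : Type*}
    [Fintype m] [Fintype k']
    (B : Matrix m k R) (A : Matrix m n R)
    (B' : Matrix m' k' R) (A' : Matrix m' n R) : Prop :=
  ∃ (U : Matrix m' m R) (V : Matrix k' k R) (G : Matrix k' n R),
    U * B = B' * V ∧ U * A = A' + B' * G
/-- The matrix over `Rᵒᵖ` whose `(i,j)` entry is the opposite-ring image of the
`(j,i)` entry of `X`. -/
def opTranspose {R : Type*} [Ring R] {m n : Type*} (X : Matrix m n R) :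
    Matrix n m Rᵐᵒᵖ :=
  Matrix.of fun i j => MulOpposite.op (X j i)

/-- The inverse operation, from matrices over `Rᵒᵖ` back to matrices over `R`. -/
def unopTranspose {R : Type*} [Ring R] {m n : Type*} (X : Matrix m n Rᵐᵒᵖ) :
    Matrix n m R :=
  Matrix.of fun i j => (X j i).unop

section Aux

variable {R : Type*} [Ring R] {a b c : Type*}

lemma opT_mul [Fintype b] (X : Matrix a b R) (Y : Matrix b c R) :
    opTranspose (X * Y) = opTranspose Y * opTranspose X := by
  ext i j
  simp [opTranspose, Matrix.mul_apply, Finset.op_sum]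

lemma unopT_mul [Fintype a] (X : Matrix a b Rᵐᵒᵖ) (Y : Matrix c a Rᵐᵒᵖ) :
    unopTranspose X * unopTranspose Y = unopTranspose (Y * X) := by
  ext i j
  simp [unopTranspose, Matrix.mul_apply, Finset.unop_sum]

lemma unopT_opT (X : Matrix a b R) : unopTranspose (opTranspose X) = X := rfl

lemma unopT_fromRows (X : Matrix a c Rᵐᵒᵖ) (Y : Matrix b c Rᵐᵒᵖ) :
    unopTranspose (Matrix.fromRows X Y) =
      Matrix.fromCols (unopTranspose X) (unopTranspose Y) := by
  ext i (j | j) <;> rfl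

lemma unopT_zero : unopTranspose (0 : Matrix a b Rᵐᵒᵖ) = 0 := by
  ext i j; simp [unopTranspose]

lemma unopT_one [DecidableEq a] : unopTranspose (1 : Matrix a a Rᵐᵒᵖ) = 1 := by
  ext i j
  simp [unopTranspose, Matrix.one_apply, eq_comm]
  split <;> simp

lemma unopT_add (X Y : Matrix a b Rᵐᵒᵖ) :
    unopTranspose (X + Y) = unopTranspose X + unopTranspose Y := by
  ext i j; simp [unopTranspose]

lemma opT_add (X Y : Matrix a b R) :
    opTranspose (X + Y) = opTranspose X + opTranspose Y := by
  ext i j; simp [opTranspose]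

lemma fromRows_add {m₁ m₂ n : Type*} (A₁ : Matrix m₁ n R) (A₂ : Matrix m₂ n R)
    (B₁ : Matrix m₁ n R) (B₂ : Matrix m₂ n R) :
    Matrix.fromRows A₁ A₂ + Matrix.fromRows B₁ B₂ = Matrix.fromRows (A₁ + B₁) (A₂ + B₂) := by
  ext (i | i) j <;> simp

lemma fromColumns_add {m n₁ n₂ : Type*} (A₁ : Matrix m n₁ R) (A₂ : Matrix m n₂ R)
    (B₁ : Matrix m n₁ R) (B₂ : Matrix m n₂ R) :
    Matrix.fromCols A₁ A₂ + Matrix.fromCols B₁ B₂ =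
      Matrix.fromCols (A₁ + B₁) (A₂ + B₂) := by
  ext i (j | j) <;> simp

end Aux

/-- The dual map `(B | A) ↦ ([Bᵀ; Aᵀ] | [0; Iₙ])` is an anti-isomorphism up to
equivalence: it is order-reversing in both directions, and the double dual of a pair
is equivalent to the pair itself. -/
theorem dual_anti_isomorphism {R : Type*} [Ring R] {m k m' k' n : ℕ}
    (B : Matrix (Fin m) (Fin k) R) (A : Matrix (Fin m) (Fin n) R)
    (B' : Matrix (Fin m') (Fin k') R) (A' : Matrix (Fin m') (Fin n) R) :
    (MatPairLE R B A B' A' ↔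
      MatPairLE Rᵐᵒᵖ
        (Matrix.fromRows (opTranspose B') (opTranspose A'))
        (Matrix.fromRows (0 : Matrix (Fin k') (Fin n) Rᵐᵒᵖ)
          (1 : Matrix (Fin n) (Fin n) Rᵐᵒᵖ))
        (Matrix.fromRows (opTranspose B) (opTranspose A))
        (Matrix.fromRows (0 : Matrix (Fin k) (Fin n) Rᵐᵒᵖ)
          (1 : Matrix (Fin n) (Fin n) Rᵐᵒᵖ))) ∧
    (MatPairLE R
        (Matrix.fromRows
          (unopTranspose (Matrix.fromRows (opTranspose B) (opTranspose A)))
          (unopTranspose (Matrix.fromRows (0 : Matrix (Fin k) (Fin n) Rᵐᵒᵖ)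
            (1 : Matrix (Fin n) (Fin n) Rᵐᵒᵖ))))
        (Matrix.fromRows (0 : Matrix (Fin m) (Fin n) R)
          (1 : Matrix (Fin n) (Fin n) R))
        B A ∧
      MatPairLE R B A
        (Matrix.fromRows
          (unopTranspose (Matrix.fromRows (opTranspose B) (opTranspose A)))
          (unopTranspose (Matrix.fromRows (0 : Matrix (Fin k) (Fin n) Rᵐᵒᵖ)
            (1 : Matrix (Fin n) (Fin n) Rᵐᵒᵖ))))
        (Matrix.fromRows (0 : Matrix (Fin m) (Fin n) R)
          (1 : Matrix (Fin n) (Fin n) R))) := by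
  have hBdd :
      Matrix.fromRows
          (unopTranspose (Matrix.fromRows (opTranspose B) (opTranspose A)))
          (unopTranspose (Matrix.fromRows (0 : Matrix (Fin k) (Fin n) Rᵐᵒᵖ)
            (1 : Matrix (Fin n) (Fin n) Rᵐᵒᵖ))) =
        Matrix.fromRows (Matrix.fromCols B A)
          (Matrix.fromCols (0 : Matrix (Fin n) (Fin k) R)
            (1 : Matrix (Fin n) (Fin n) R)) := by
    rw [unopT_fromRows, unopT_fromRows, unopT_opT, unopT_opT, unopT_zero, unopT_one]
  refine ⟨⟨fun ⟨U, V, G, h1, h2⟩ => ?_, fun ⟨U₀, V₀, G₀, h1, h2⟩ => ?_⟩, ?_, ?_⟩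
  · refine ⟨Matrix.fromRows (Matrix.fromCols (opTranspose V) 0)
        (Matrix.fromCols (opTranspose G) 1), opTranspose U, 0, ?_, ?_⟩
    · rw [Matrix.fromRows_mul, Matrix.fromCols_mul_fromRows,
        Matrix.fromCols_mul_fromRows, Matrix.fromRows_mul]
      rw [Matrix.zero_mul, add_zero, Matrix.one_mul, ← opT_mul, ← opT_mul, ← opT_mul,
        ← opT_mul, h1, h2, opT_add, add_comm]
    · rw [Matrix.mul_zero, add_zero, Matrix.fromRows_mul, Matrix.fromCols_mul_fromRows,
        Matrix.fromCols_mul_fromRows]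
      simp
  · -- converse of part 1
    set P := (U₀.toRows₁).toCols₁ with hP
    set Q := (U₀.toRows₁).toCols₂ with hQ
    set S := (U₀.toRows₂).toCols₁ with hS
    set T := (U₀.toRows₂).toCols₂ with hT
    have hU₀ : U₀ = Matrix.fromRows (Matrix.fromCols P Q) (Matrix.fromCols S T) := by
      rw [hP, hQ, hS, hT, Matrix.fromCols_toCols, Matrix.fromCols_toCols,
        Matrix.fromRows_toRows]
    rw [hU₀, Matrix.fromRows_mul, Matrix.fromCols_mul_fromRows,
      Matrix.fromCols_mul_fromRows, Matrix.fromRows_mul] at h1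
    rw [hU₀, Matrix.fromRows_mul, Matrix.fromCols_mul_fromRows,
      Matrix.fromCols_mul_fromRows, Matrix.fromRows_mul, fromRows_add,
      Matrix.fromRows_ext_iff] at h2
    rw [Matrix.fromRows_ext_iff] at h1
    obtain ⟨e1, e2⟩ := h1
    obtain ⟨eQ, eT⟩ := h2
    rw [Matrix.mul_zero, zero_add, Matrix.mul_one] at eQ eT
    rw [zero_add] at eQ
    have keyB : opTranspose B * (V₀ - G₀ * opTranspose A') = P * opTranspose B' := by
      rw [Matrix.mul_sub, ← e1, ← Matrix.mul_assoc, ← eQ, add_sub_cancel_right]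
    have hAG : opTranspose A * G₀ = T - 1 := by rw [eT]; abel
    have keyA : opTranspose A * (V₀ - G₀ * opTranspose A') =
        S * opTranspose B' + opTranspose A' := by
      rw [Matrix.mul_sub, ← e2, ← Matrix.mul_assoc, hAG, Matrix.sub_mul, Matrix.one_mul]
      abel
    refine ⟨unopTranspose (V₀ - G₀ * opTranspose A'), unopTranspose P, unopTranspose S,
      ?_, ?_⟩
    · conv_lhs => rw [← unopT_opT B]
      rw [unopT_mul, keyB, ← unopT_mul, unopT_opT]
    · conv_lhs => rw [← unopT_opT A]
      rw [unopT_mul, keyA, unopT_add, ← unopT_mul, unopT_opT, unopT_opT, add_comm]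
  · -- double dual ≤ original
    rw [hBdd]
    refine ⟨Matrix.fromCols (-1) A, Matrix.fromCols (-1) 0, 0, ?_, ?_⟩
    · rw [Matrix.fromCols_mul_fromRows, Matrix.mul_fromCols, Matrix.mul_fromCols,
        Matrix.mul_fromCols, fromColumns_add]
      simp
    · rw [Matrix.fromCols_mul_fromRows]
      simp
  · -- original ≤ double dual
    rw [hBdd]
    refine ⟨Matrix.fromRows (-1) 0, Matrix.fromRows (-1) 0, Matrix.fromRows 0 (-1), ?_, ?_⟩
    · rw [Matrix.fromRows_mul, Matrix.fromRows_mul, Matrix.fromCols_mul_fromRows,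
        Matrix.fromCols_mul_fromRows]
      simp
    · rw [Matrix.fromRows_mul, Matrix.fromRows_mul, Matrix.fromCols_mul_fromRows,
        Matrix.fromCols_mul_fromRows, fromRows_add]
      simp
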